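/- In a closed process system over a finite type U with initial configuration c₀ = (pos₀, D₀), let Reach denote the set of databases produced by executions from c₀ (so D₀ ∈ Reach, and D₀ ⊆ D for every D ∈ Reach). Let A be a type and let q : Finset U → Finset A be monotone with respect to inclusion. Then q D = q D₀ for every D ∈ Reach if and only if q D* = q D₀ for every D* that is a maximal element of Reach with respect to inclusion. -/

import Mathlib

/-- A closed process system over a type `U` of facts. -/
structure ProcSys (U : Type) [DecidableEq U] where
  /-- places -/
  P : Type
  /-- transitions -/
  T : Type
  [finP : Fintype P]
  [finT : Fintype T]
  src : T → P
  tgt : T → P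
  /-- number of process instances -/
  k : ℕ
  /-- enabling predicate -/
  En : Fin k → T → Finset U → Prop
  /-- writing function -/
  Wr : Fin k → T → Finset U → Finset U

attribute [instance] ProcSys.finP ProcSys.finT

namespace ProcSys

variable {U : Type} [DecidableEq U]

/-- A configuration: positions of the instances together with a database. -/
abbrev Config (S : ProcSys U) : Type := (Fin S.k → S.P) × Finset U

/-- An allowed step by instance `i` via transition `t`. -/
def Step (S : ProcSys U) (i : Fin S.k) (t : S.T) (c c' : S.Config) : Prop :=
  c.1 i = S.src t ∧ S.En i t c.2 ∧
    c' = (Function.update c.1 i (S.tgt t), c.2 ∪ S.Wr i t c.2)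

/-- `f` (restricted to `0, …, n`) is an execution of length `n` from configuration `c`. -/
def IsExec (S : ProcSys U) (c : S.Config) (n : ℕ) (f : ℕ → S.Config) : Prop :=
  f 0 = c ∧ ∀ j < n, ∃ (i : Fin S.k) (t : S.T), S.Step i t (f j) (f (j + 1))

end ProcSys

/-- The database `D` is produced by some execution from configuration `c`. -/
def ProcSys.Produces {U : Type} [DecidableEq U] (S : ProcSys U) (c : S.Config)
    (D : Finset U) : Prop :=
  ∃ (n : ℕ) (f : ℕ → S.Config), S.IsExec c n f ∧ (f n).2 = D

lemma ProcSys.subset_of_produces {U : Type} [DecidableEq U] (S : ProcSys U)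
    (c : S.Config) (D : Finset U) (h : S.Produces c D) : c.2 ⊆ D := by
  obtain ⟨n, f, ⟨h0, hstep⟩, hD⟩ := h
  subst hD
  have key : ∀ m ≤ n, c.2 ⊆ (f m).2 := by
    intro m hm
    induction m with
    | zero => rw [h0]
    | succ j ih =>
      obtain ⟨i, t, _, _, heq⟩ := hstep j (by omega)
      rw [heq]
      exact (ih (by omega)).trans Finset.subset_union_left
  exact key n le_rfl

/-- a monotone query `q` is stable (returns `q D₀` on every producible
database) iff it returns `q D₀` on every ⊆-maximal producible database. -/
theorem stable_iff_stable_on_maximal (U : Type) [Fintype U] [DecidableEq U]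
    (S : ProcSys U) (pos₀ : Fin S.k → S.P) (D₀ : Finset U)
    (A : Type) [DecidableEq A] (q : Finset U → Finset A)
    (hq : ∀ D E : Finset U, D ⊆ E → q D ⊆ q E) :
    (∀ D : Finset U, S.Produces (pos₀, D₀) D → q D = q D₀) ↔
    (∀ Dstar : Finset U, S.Produces (pos₀, D₀) Dstar →
        (∀ D : Finset U, S.Produces (pos₀, D₀) D → Dstar ⊆ D → D = Dstar) →
        q Dstar = q D₀) := by
  constructor
  · intro h Dstar hP _
    exact h Dstar hP
  · intro h D hD
    -- find a maximal producible extension of D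
    have hfin : ({E : Finset U | S.Produces (pos₀, D₀) E ∧ D ⊆ E}).Finite :=
      Set.toFinite _
    have hne : ({E : Finset U | S.Produces (pos₀, D₀) E ∧ D ⊆ E}).Nonempty :=
      ⟨D, hD, le_rfl⟩
    obtain ⟨Dstar, ⟨hPs, hDs⟩, hmax⟩ :=
      hfin.exists_maximalFor id _ hne
    have hmax' : ∀ E : Finset U, S.Produces (pos₀, D₀) E → Dstar ⊆ E → E = Dstar := by
      intro E hE hsub
      exact Finset.Subset.antisymm (hmax ⟨hE, hDs.trans hsub⟩ hsub) hsub
    have hqs := h Dstar hPs hmax'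
    have h1 : q D₀ ⊆ q D :=
      hq _ _ (S.subset_of_produces _ _ hD)
    have h2 : q D ⊆ q Dstar := hq _ _ hDs
    exact Finset.Subset.antisymm (h2.trans hqs.le) h1
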